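/- Let e: ℝⁿ → ℝⁿ, f: ℝⁿ×ℝᵐ → ℝⁿ, g: ℝⁿ×ℝᵐ → ℝᵖ, let P be an n×n symmetric positive-definite matrix, and let μ > 0 satisfy the stability constraint |f(x₁,u) − f(x₂,u)|²_{P⁻¹} − 2(x₁−x₂)'(e(x₁)−e(x₂)) + |x₁−x₂|²_{P+μI} + |g(x₁,u)−g(x₂,u)|² ≤ 0 for all x₁, x₂ ∈ ℝⁿ and u ∈ ℝᵐ. Let u: ℕ → ℝᵐ be any input sequence, and let x₁, x₂: ℕ → ℝⁿ be any two sequences satisfying e(xᵢ(t+1)) = f(xᵢ(t), u(t)) for all t ∈ ℕ (i = 1,2), with outputs yᵢ(t) = g(xᵢ(t), u(t)). Then for every T ∈ ℕ, Σ_{t=0}^{T} ( μ|x₁(t)−x₂(t)|² + |y₁(t)−y₂(t)|² ) ≤ |e(x₁(0))−e(x₂(0))|²_{P⁻¹}. In particular Σ_{t=0}^{∞} |x₁(t)−x₂(t)|² < ∞ and Σ_{t=0}^{∞} |y₁(t)−y₂(t)|² < ∞, i.e. the model is globally incrementally ℓ² stable. -/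

import Mathlib

open Matrix

/-- Under the stability constraint, for any two trajectories
`x₁, x₂` of the implicit model `e(x(t+1)) = f(x(t),u(t))` driven by the same
input `u`, with outputs `yᵢ(t) = g(xᵢ(t),u(t))`, we have for every `T`
`Σ_{t=0}^{T} ( μ|x₁(t)−x₂(t)|² + |y₁(t)−y₂(t)|² ) ≤ |e(x₁(0))−e(x₂(0))|²_{P⁻¹}`,
and in particular the state and output differences are square-summable
(global incremental ℓ² stability). -/
theorem stmt4 {n m p : ℕ}
    (e : (Fin n → ℝ) → (Fin n → ℝ))
    (f : (Fin n → ℝ) → (Fin m → ℝ) → (Fin n → ℝ))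
    (g : (Fin n → ℝ) → (Fin m → ℝ) → (Fin p → ℝ))
    (P : Matrix (Fin n) (Fin n) ℝ) (hP : P.PosDef) (μ : ℝ) (hμ : 0 < μ)
    (hstab : ∀ (x₁ x₂ : Fin n → ℝ) (u : Fin m → ℝ),
      (f x₁ u - f x₂ u) ⬝ᵥ (P⁻¹ *ᵥ (f x₁ u - f x₂ u))
        - 2 * ((x₁ - x₂) ⬝ᵥ (e x₁ - e x₂))
        + (x₁ - x₂) ⬝ᵥ ((P + μ • (1 : Matrix (Fin n) (Fin n) ℝ)) *ᵥ (x₁ - x₂))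
        + (g x₁ u - g x₂ u) ⬝ᵥ (g x₁ u - g x₂ u) ≤ 0)
    (u : ℕ → Fin m → ℝ) (x₁ x₂ : ℕ → Fin n → ℝ)
    (hdyn₁ : ∀ t : ℕ, e (x₁ (t + 1)) = f (x₁ t) (u t))
    (hdyn₂ : ∀ t : ℕ, e (x₂ (t + 1)) = f (x₂ t) (u t)) :
    (∀ T : ℕ,
      ∑ t ∈ Finset.range (T + 1),
        (μ * ((x₁ t - x₂ t) ⬝ᵥ (x₁ t - x₂ t))
          + (g (x₁ t) (u t) - g (x₂ t) (u t)) ⬝ᵥ (g (x₁ t) (u t) - g (x₂ t) (u t)))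
        ≤ (e (x₁ 0) - e (x₂ 0)) ⬝ᵥ (P⁻¹ *ᵥ (e (x₁ 0) - e (x₂ 0)))) ∧
    Summable (fun t : ℕ => (x₁ t - x₂ t) ⬝ᵥ (x₁ t - x₂ t)) ∧
    Summable (fun t : ℕ =>
      (g (x₁ t) (u t) - g (x₂ t) (u t)) ⬝ᵥ (g (x₁ t) (u t) - g (x₂ t) (u t))) := by
  have hPinv : P⁻¹.PosSemidef := hP.inv.posSemidef
  have hPsd : P.PosSemidef := hP.posSemidef
  have hPT : Pᵀ = P := by
    rw [← P.conjTranspose_eq_transpose_of_trivial, hP.isHermitian.eq]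
  set V : ℕ → ℝ := fun t => (e (x₁ t) - e (x₂ t)) ⬝ᵥ (P⁻¹ *ᵥ (e (x₁ t) - e (x₂ t))) with hV
  have hVnonneg : ∀ t, 0 ≤ V t := fun t => by
    have := hPinv.dotProduct_mulVec_nonneg (e (x₁ t) - e (x₂ t))
    simpa only [star_trivial] using this
  -- key algebraic inequality: 0 ≤ a⬝Pa − 2 a⬝b + b⬝P⁻¹b
  have key : ∀ a b : Fin n → ℝ,
      0 ≤ a ⬝ᵥ (P *ᵥ a) - 2 * (a ⬝ᵥ b) + b ⬝ᵥ (P⁻¹ *ᵥ b) := by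
    intro a b
    set c : Fin n → ℝ := P⁻¹ *ᵥ b with hc
    have h0 : (0:ℝ) ≤ (a - c) ⬝ᵥ (P *ᵥ (a - c)) := by
      have := hPsd.dotProduct_mulVec_nonneg (a - c)
      simpa only [star_trivial] using this
    have hPc : P *ᵥ c = b := by
      rw [hc, Matrix.mulVec_mulVec, Matrix.mul_nonsing_inv _ (isUnit_iff_ne_zero.mpr hP.det_pos.ne'),
        Matrix.one_mulVec]
    have hcPa : c ⬝ᵥ (P *ᵥ a) = a ⬝ᵥ b := by
      rw [Matrix.dotProduct_mulVec, ← Matrix.mulVec_transpose, hPT, hPc, dotProduct_comm]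
    have hexp : (a - c) ⬝ᵥ (P *ᵥ (a - c))
        = a ⬝ᵥ (P *ᵥ a) - 2 * (a ⬝ᵥ b) + b ⬝ᵥ (P⁻¹ *ᵥ b) := by
      rw [Matrix.mulVec_sub, sub_dotProduct, dotProduct_sub,
        dotProduct_sub, hPc, hcPa, dotProduct_comm c b, ← hc]
      ring
    linarith [hexp ▸ h0]
  -- one-step decrease
  have step : ∀ t : ℕ,
      V (t + 1) + (μ * ((x₁ t - x₂ t) ⬝ᵥ (x₁ t - x₂ t))
        + (g (x₁ t) (u t) - g (x₂ t) (u t)) ⬝ᵥ (g (x₁ t) (u t) - g (x₂ t) (u t))) ≤ V t := by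
    intro t
    have h := hstab (x₁ t) (x₂ t) (u t)
    rw [← hdyn₁ t, ← hdyn₂ t] at h
    have hsplit : (x₁ t - x₂ t) ⬝ᵥ ((P + μ • (1 : Matrix (Fin n) (Fin n) ℝ)) *ᵥ (x₁ t - x₂ t))
        = (x₁ t - x₂ t) ⬝ᵥ (P *ᵥ (x₁ t - x₂ t))
          + μ * ((x₁ t - x₂ t) ⬝ᵥ (x₁ t - x₂ t)) := by
      rw [Matrix.add_mulVec, dotProduct_add, Matrix.smul_mulVec,
        Matrix.one_mulVec, dotProduct_smul]
      simp [smul_eq_mul]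
    rw [hsplit] at h
    have hk := key (x₁ t - x₂ t) (e (x₁ t) - e (x₂ t))
    simp only [hV]
    linarith
  -- telescoping bound
  have tel : ∀ T : ℕ,
      ∑ t ∈ Finset.range T,
        (μ * ((x₁ t - x₂ t) ⬝ᵥ (x₁ t - x₂ t))
          + (g (x₁ t) (u t) - g (x₂ t) (u t)) ⬝ᵥ (g (x₁ t) (u t) - g (x₂ t) (u t)))
        ≤ V 0 - V T := by
    intro T
    induction T with
    | zero => simp
    | succ T ih =>
      rw [Finset.sum_range_succ]
      have := step T
      linarith
  have main : ∀ T : ℕ,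
      ∑ t ∈ Finset.range (T + 1),
        (μ * ((x₁ t - x₂ t) ⬝ᵥ (x₁ t - x₂ t))
          + (g (x₁ t) (u t) - g (x₂ t) (u t)) ⬝ᵥ (g (x₁ t) (u t) - g (x₂ t) (u t)))
        ≤ (e (x₁ 0) - e (x₂ 0)) ⬝ᵥ (P⁻¹ *ᵥ (e (x₁ 0) - e (x₂ 0))) := by
    intro T
    have := tel (T + 1)
    have := hVnonneg (T + 1)
    simp only [hV] at *
    linarith
  have hxnn : ∀ t : ℕ, (0:ℝ) ≤ (x₁ t - x₂ t) ⬝ᵥ (x₁ t - x₂ t) := fun t =>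
    Finset.sum_nonneg fun i _ => mul_self_nonneg _
  have hynn : ∀ t : ℕ, (0:ℝ) ≤
      (g (x₁ t) (u t) - g (x₂ t) (u t)) ⬝ᵥ (g (x₁ t) (u t) - g (x₂ t) (u t)) := fun t =>
    Finset.sum_nonneg fun i _ => mul_self_nonneg _
  have bound : ∀ T : ℕ,
      ∑ t ∈ Finset.range T,
        (μ * ((x₁ t - x₂ t) ⬝ᵥ (x₁ t - x₂ t))
          + (g (x₁ t) (u t) - g (x₂ t) (u t)) ⬝ᵥ (g (x₁ t) (u t) - g (x₂ t) (u t))) ≤ V 0 := by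
    intro T
    have := tel T
    have := hVnonneg T
    linarith
  refine ⟨main, ?_, ?_⟩
  · apply summable_of_sum_range_le (c := V 0 / μ) (fun t => hxnn t)
    intro T
    have hb := bound T
    have hle : μ * ∑ t ∈ Finset.range T, (x₁ t - x₂ t) ⬝ᵥ (x₁ t - x₂ t) ≤ V 0 := by
      rw [Finset.mul_sum]
      refine le_trans ?_ hb
      apply Finset.sum_le_sum
      intro i _
      linarith [hynn i]
    rw [le_div_iff₀ hμ]
    linarith [hle]
  · apply summable_of_sum_range_le (c := V 0) (fun t => hynn t)
    intro T
    refine le_trans ?_ (bound T)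
    apply Finset.sum_le_sum
    intro i _
    have := hxnn i
    nlinarith
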